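/- For every finite simple graph G with at least one edge, ⌈dc₁(G)⌉ = pw₁(G) ≤ re₁(G). -/

import Mathlib

set_option linter.unusedSectionVars false


open Real

noncomputable section

/-- The Euclidean plane. -/
abbrev Pt := EuclideanSpace ℝ (Fin 2)

variable {V : Type*} [Fintype V]

/-- A representation is non-edge-degenerate if endpoints of every edge are mapped
to distinct points. -/
def NED (G : SimpleGraph V) (ρ : V → Pt) : Prop := ∀ ⦃u v⦄, G.Adj u v → ρ u ≠ ρ v

/-- Maximum edge length of a representation. -/
def maxE (G : SimpleGraph V) (ρ : V → Pt) : ℝ :=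
  sSup {d | ∃ u v, G.Adj u v ∧ d = dist (ρ u) (ρ v)}

/-- Minimum edge length of a representation. -/
def minE (G : SimpleGraph V) (ρ : V → Pt) : ℝ :=
  sInf {d | ∃ u v, G.Adj u v ∧ d = dist (ρ u) (ρ v)}

/-- Maximum distance between images of two distinct vertices. -/
def maxP (ρ : V → Pt) : ℝ := sSup {d | ∃ u v : V, u ≠ v ∧ d = dist (ρ u) (ρ v)}

/-- Minimum distance between images of two distinct vertices. -/
def minP (ρ : V → Pt) : ℝ := sInf {d | ∃ u v : V, u ≠ v ∧ d = dist (ρ u) (ρ v)}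

/-- The dilation coefficient of a graph. -/
def dc (G : SimpleGraph V) : ℝ :=
  sInf {r | ∃ ρ : V → Pt, NED G ρ ∧ r = maxE G ρ / minE G ρ}

/-- The plane-width of a graph. -/
def pw (G : SimpleGraph V) : ℝ :=
  sInf {r | ∃ ρ : V → Pt, NED G ρ ∧ r = maxP ρ / minE G ρ}

/-- The resolution coefficient of a graph. -/
def re (G : SimpleGraph V) : ℝ :=
  sInf {r | ∃ ρ : V → Pt, Function.Injective ρ ∧ r = maxE G ρ / minP ρ}

/-- One-dimensional non-edge-degeneracy. -/
def NED1 (G : SimpleGraph V) (ρ : V → ℝ) : Prop := ∀ ⦃u v⦄, G.Adj u v → ρ u ≠ ρ v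

def maxE1 (G : SimpleGraph V) (ρ : V → ℝ) : ℝ :=
  sSup {d | ∃ u v, G.Adj u v ∧ d = |ρ u - ρ v|}

def minE1 (G : SimpleGraph V) (ρ : V → ℝ) : ℝ :=
  sInf {d | ∃ u v, G.Adj u v ∧ d = |ρ u - ρ v|}

def maxP1 (ρ : V → ℝ) : ℝ := sSup {d | ∃ u v : V, u ≠ v ∧ d = |ρ u - ρ v|}

def minP1 (ρ : V → ℝ) : ℝ := sInf {d | ∃ u v : V, u ≠ v ∧ d = |ρ u - ρ v|}

/-- The one-dimensional dilation coefficient. -/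
def dc1 (G : SimpleGraph V) : ℝ :=
  sInf {r | ∃ ρ : V → ℝ, NED1 G ρ ∧ r = maxE1 G ρ / minE1 G ρ}

/-- The one-dimensional plane-width ("line-width"). -/
def pw1 (G : SimpleGraph V) : ℝ :=
  sInf {r | ∃ ρ : V → ℝ, NED1 G ρ ∧ r = maxP1 ρ / minE1 G ρ}

/-- The one-dimensional resolution coefficient. -/
def re1 (G : SimpleGraph V) : ℝ :=
  sInf {r | ∃ ρ : V → ℝ, Function.Injective ρ ∧ r = maxE1 G ρ / minP1 ρ}


-- ===== auxiliary lemmas =====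

lemma floor_lt_floor_of_add_one_le {x y : ℝ} (h : x + 1 ≤ y) : ⌊x⌋ < ⌊y⌋ := by
  have h1 : ⌊x + 1⌋ ≤ ⌊y⌋ := Int.floor_le_floor h
  rw [Int.floor_add_one] at h1; omega

lemma floor_ne_of_one_le_abs {x y : ℝ} (h : 1 ≤ |x - y|) : ⌊x⌋ ≠ ⌊y⌋ := by
  rcases le_total x y with hxy | hxy
  · have hx : x + 1 ≤ y := by rw [abs_sub_comm, abs_of_nonneg (by linarith)] at h; linarith
    exact (floor_lt_floor_of_add_one_le hx).ne
  · have hx : y + 1 ≤ x := by rw [abs_of_nonneg (by linarith)] at h; linarith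
    exact (floor_lt_floor_of_add_one_le hx).ne'

lemma E_finite (G : SimpleGraph V) (ρ : V → ℝ) :
    {d | ∃ u v, G.Adj u v ∧ d = |ρ u - ρ v|}.Finite := by
  have hsub : {d | ∃ u v, G.Adj u v ∧ d = |ρ u - ρ v|} ⊆
      (fun p : V × V => |ρ p.1 - ρ p.2|) '' Set.univ := by
    rintro d ⟨u, v, _, rfl⟩; exact ⟨(u, v), trivial, rfl⟩
  exact (Set.finite_univ.image _).subset hsub

lemma P_finite (ρ : V → ℝ) :
    {d | ∃ u v : V, u ≠ v ∧ d = |ρ u - ρ v|}.Finite := by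
  have hsub : {d | ∃ u v : V, u ≠ v ∧ d = |ρ u - ρ v|} ⊆
      (fun p : V × V => |ρ p.1 - ρ p.2|) '' Set.univ := by
    rintro d ⟨u, v, _, rfl⟩; exact ⟨(u, v), trivial, rfl⟩
  exact (Set.finite_univ.image _).subset hsub

omit [Fintype V] in
lemma exists_adj (G : SimpleGraph V) (hG : G.edgeSet.Nonempty) : ∃ u v, G.Adj u v := by
  obtain ⟨e, he⟩ := hG
  refine Sym2.ind (fun u v he => ⟨u, v, (G.mem_edgeSet).mp he⟩) e he

variable {G : SimpleGraph V} {ρ : V → ℝ}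

lemma E_nonempty (G : SimpleGraph V) (ρ : V → ℝ) (hG : G.edgeSet.Nonempty) : {d | ∃ u v, G.Adj u v ∧ d = |ρ u - ρ v|}.Nonempty := by
  obtain ⟨u, v, h⟩ := exists_adj G hG
  exact ⟨_, u, v, h, rfl⟩

lemma P_nonempty (G : SimpleGraph V) (ρ : V → ℝ) (hG : G.edgeSet.Nonempty) : {d | ∃ u v : V, u ≠ v ∧ d = |ρ u - ρ v|}.Nonempty := by
  obtain ⟨u, v, h⟩ := exists_adj G hG
  exact ⟨_, u, v, h.ne, rfl⟩

lemma minE1_mem (G : SimpleGraph V) (ρ : V → ℝ) (hG : G.edgeSet.Nonempty) : minE1 G ρ ∈ {d | ∃ u v, G.Adj u v ∧ d = |ρ u - ρ v|} :=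
  (E_nonempty G ρ hG).csInf_mem (E_finite G ρ)

lemma maxE1_mem (G : SimpleGraph V) (ρ : V → ℝ) (hG : G.edgeSet.Nonempty) : maxE1 G ρ ∈ {d | ∃ u v, G.Adj u v ∧ d = |ρ u - ρ v|} :=
  (E_nonempty G ρ hG).csSup_mem (E_finite G ρ)

lemma minE1_le (G : SimpleGraph V) (ρ : V → ℝ) {u v : V} (h : G.Adj u v) : minE1 G ρ ≤ |ρ u - ρ v| :=
  csInf_le (E_finite G ρ).bddBelow ⟨u, v, h, rfl⟩

lemma le_maxE1 (G : SimpleGraph V) (ρ : V → ℝ) {u v : V} (h : G.Adj u v) : |ρ u - ρ v| ≤ maxE1 G ρ :=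
  le_csSup (E_finite G ρ).bddAbove ⟨u, v, h, rfl⟩

lemma minP1_le (ρ : V → ℝ) {u v : V} (h : u ≠ v) : minP1 ρ ≤ |ρ u - ρ v| :=
  csInf_le (P_finite ρ).bddBelow ⟨u, v, h, rfl⟩

lemma le_maxP1 (ρ : V → ℝ) {u v : V} (h : u ≠ v) : |ρ u - ρ v| ≤ maxP1 ρ :=
  le_csSup (P_finite ρ).bddAbove ⟨u, v, h, rfl⟩

lemma minE1_pos (G : SimpleGraph V) (ρ : V → ℝ) (hG : G.edgeSet.Nonempty) (hρ : NED1 G ρ) : 0 < minE1 G ρ := by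
  obtain ⟨u, v, h, hd⟩ := minE1_mem G ρ hG
  rw [hd]; exact abs_pos.mpr (sub_ne_zero.mpr (hρ h))

lemma minP1_pos (G : SimpleGraph V) (ρ : V → ℝ) (hG : G.edgeSet.Nonempty) (hρ : Function.Injective ρ) : 0 < minP1 ρ := by
  obtain ⟨u, v, h, hd⟩ := (P_nonempty G ρ hG).csInf_mem (P_finite ρ)
  rw [show minP1 ρ = sInf {d | ∃ u v : V, u ≠ v ∧ d = |ρ u - ρ v|} from rfl, hd]
  exact abs_pos.mpr (sub_ne_zero.mpr (fun hc => h (hρ hc)))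

lemma maxE1_nonneg (G : SimpleGraph V) (ρ : V → ℝ) (hG : G.edgeSet.Nonempty) : 0 ≤ maxE1 G ρ := by
  obtain ⟨u, v, _, hd⟩ := maxE1_mem G ρ hG
  rw [hd]; positivity

lemma minE1_le_maxE1 (G : SimpleGraph V) (ρ : V → ℝ) (hG : G.edgeSet.Nonempty) : minE1 G ρ ≤ maxE1 G ρ := by
  obtain ⟨u, v, h, hd⟩ := minE1_mem G ρ hG
  rw [hd]; exact le_maxE1 G ρ h

lemma one_le_abs_natCast {a b : ℕ} (h : a ≠ b) : 1 ≤ |(a : ℝ) - b| := by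
  have h1 : (1 : ℤ) ≤ |(a : ℤ) - (b : ℤ)| :=
    Int.one_le_abs (sub_ne_zero.mpr (by exact_mod_cast h))
  have h2 : ((1 : ℤ) : ℝ) ≤ ((|(a : ℤ) - (b : ℤ)| : ℤ) : ℝ) := by exact_mod_cast h1
  push_cast at h2
  exact h2

lemma colorable_exists (G : SimpleGraph V) : ∃ n, G.Colorable n :=
  ⟨Fintype.card V, G.colorable_of_fintype⟩

/-- The chromatic number. -/
def chrom (G : SimpleGraph V) : ℕ :=
  @Nat.find _ (Classical.decPred _) (colorable_exists G)

lemma chrom_spec (G : SimpleGraph V) : G.Colorable (chrom G) :=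
  @Nat.find_spec _ (Classical.decPred _) (colorable_exists G)

lemma chrom_min (G : SimpleGraph V) {n : ℕ} (h : G.Colorable n) : chrom G ≤ n :=
  @Nat.find_min' _ (Classical.decPred _) (colorable_exists G) _ h

lemma two_le_chrom (G : SimpleGraph V) (hG : G.edgeSet.Nonempty) : 2 ≤ chrom G := by
  by_contra h
  push_neg at h
  have hcol : G.Colorable 1 := (chrom_spec G).mono (by omega)
  obtain ⟨u, v, huv⟩ := exists_adj G hG
  obtain ⟨C⟩ := hcol
  exact C.valid huv (Subsingleton.elim _ _)

/-- The pigeonhole shift lemma: a shift θ = i·s avoiding large fractional parts. -/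
lemma exists_good_shift (n : ℕ) (x : V → ℝ) (hcard : Fintype.card V ≤ n) :
    ∃ i : ℕ, i ≤ n ∧ ∀ v, Int.fract (x v - i * (1 / ((n : ℝ) + 1))) < 1 - 1 / ((n : ℝ) + 1) := by
  set s : ℝ := 1 / ((n : ℝ) + 1) with hs
  have hn1 : (0 : ℝ) < (n : ℝ) + 1 := by positivity
  have hspos : 0 < s := by positivity
  have hns : (n : ℝ) * s = 1 - s := by
    rw [hs]; field_simp; ring
  by_contra hcon
  push_neg at hcon
  have hbad : ∀ i : Fin (n + 1), ∃ v, 1 - s ≤ Int.fract (x v - (i : ℕ) * s) := by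
    intro i
    obtain ⟨v, hv⟩ := hcon (i : ℕ) (by omega)
    exact ⟨v, hv⟩
  choose f hf using hbad
  have hlt : Fintype.card V < Fintype.card (Fin (n + 1)) := by
    simpa using Nat.lt_succ_of_le hcard
  obtain ⟨i, j, hij, hfij⟩ := Fintype.exists_ne_map_eq_of_card_lt f hlt
  apply hij
  set v := f i with hv
  have h1 : 1 - s ≤ Int.fract (x v - (i : ℕ) * s) := hf i
  have h2 : 1 - s ≤ Int.fract (x v - (j : ℕ) * s) := by
    have := hf j; rw [← hfij] at this; exact this
  -- derive i = j
  set a := x v - (i : ℕ) * s with ha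
  set b := x v - (j : ℕ) * s with hb
  have hfa1 : Int.fract a < 1 := Int.fract_lt_one a
  have hfb1 : Int.fract b < 1 := Int.fract_lt_one b
  have hAa : (⌊a⌋ : ℝ) + Int.fract a = a := Int.floor_add_fract a
  have hBb : (⌊b⌋ : ℝ) + Int.fract b = b := Int.floor_add_fract b
  have hiN : ((i : ℕ) : ℝ) ≤ (n : ℝ) := by exact_mod_cast Nat.lt_succ_iff.mp i.isLt
  have hjN : ((j : ℕ) : ℝ) ≤ (n : ℝ) := by exact_mod_cast Nat.lt_succ_iff.mp j.isLt
  have hiN0 : (0 : ℝ) ≤ ((i : ℕ) : ℝ) := by positivity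
  have hjN0 : (0 : ℝ) ≤ ((j : ℕ) : ℝ) := by positivity
  have hab : a - b = (((j : ℕ) : ℝ) - ((i : ℕ) : ℝ)) * s := by rw [ha, hb]; ring
  have hab_ub : a - b ≤ 1 - s := by
    rw [hab, ← hns]
    have hd : ((j : ℕ) : ℝ) - ((i : ℕ) : ℝ) ≤ (n : ℝ) := by linarith
    have := mul_le_mul_of_nonneg_right hd hspos.le
    linarith
  have hab_lb : -(1 - s) ≤ a - b := by
    rw [hab, ← hns]
    have hd : -(n : ℝ) ≤ ((j : ℕ) : ℝ) - ((i : ℕ) : ℝ) := by linarith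
    have := mul_le_mul_of_nonneg_right hd hspos.le
    linarith
  -- floors are equal
  have hfloor : ⌊a⌋ = ⌊b⌋ := by
    have hABub : (⌊a⌋ : ℝ) - (⌊b⌋ : ℝ) < 1 := by linarith
    have hABlb : (-1 : ℝ) < (⌊a⌋ : ℝ) - (⌊b⌋ : ℝ) := by linarith
    have h3 : (⌊a⌋ - ⌊b⌋ : ℤ) < 1 := by exact_mod_cast (by push_cast; linarith : ((⌊a⌋ - ⌊b⌋ : ℤ) : ℝ) < 1)
    have h4 : (-1 : ℤ) < (⌊a⌋ - ⌊b⌋ : ℤ) := by exact_mod_cast (by push_cast; linarith : ((-1 : ℤ) : ℝ) < ((⌊a⌋ - ⌊b⌋ : ℤ) : ℝ))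
    omega
  -- hence |a - b| < s
  have hfl : (⌊a⌋ : ℝ) = (⌊b⌋ : ℝ) := by exact_mod_cast hfloor
  have habs : a - b < s ∧ -s < a - b := by
    constructor <;> linarith
  -- conclude i = j
  have hij' : (i : ℕ) = (j : ℕ) := by
    by_contra hne
    have habs1 : 1 ≤ |((i : ℕ) : ℝ) - ((j : ℕ) : ℝ)| := one_le_abs_natCast hne
    rcases abs_cases (((i : ℕ) : ℝ) - ((j : ℕ) : ℝ)) with ⟨heq, _⟩ | ⟨heq, _⟩ <;> rw [heq] at habs1
    · have hd : ((j : ℕ) : ℝ) - ((i : ℕ) : ℝ) ≤ -1 := by linarith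
      have := mul_le_mul_of_nonneg_right hd hspos.le
      rw [hab] at habs
      linarith [habs.2]
    · have hd : (1 : ℝ) ≤ ((j : ℕ) : ℝ) - ((i : ℕ) : ℝ) := by linarith
      have := mul_le_mul_of_nonneg_right hd hspos.le
      rw [hab] at habs
      linarith [habs.1]
  exact Fin.ext hij'

lemma abs_natCast_sub_le {a b k : ℕ} (ha : a < k) (hb : b < k) :
    |(a : ℝ) - b| ≤ (k : ℝ) - 1 := by
  have ha' : (a : ℝ) + 1 ≤ k := by exact_mod_cast Nat.succ_le_of_lt ha
  have hb' : (b : ℝ) + 1 ≤ k := by exact_mod_cast Nat.succ_le_of_lt hb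
  have ha0 : (0 : ℝ) ≤ a := Nat.cast_nonneg a
  have hb0 : (0 : ℝ) ≤ b := Nat.cast_nonneg b
  rw [abs_le]; constructor <;> linarith

/-- An optimal coloring yields a good line representation. -/
lemma coloring_rep (G : SimpleGraph V) (hG : G.edgeSet.Nonempty) :
    ∃ ρ : V → ℝ, NED1 G ρ ∧ 1 ≤ minE1 G ρ ∧ maxE1 G ρ ≤ (chrom G : ℝ) - 1 ∧
      maxP1 ρ ≤ (chrom G : ℝ) - 1 := by
  obtain ⟨C⟩ := chrom_spec G
  refine ⟨fun v => ((C v : ℕ) : ℝ), ?_, ?_, ?_, ?_⟩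
  · intro u v huv hc
    have hc' : ((C u : ℕ) : ℝ) = ((C v : ℕ) : ℝ) := hc
    exact C.valid huv (Fin.ext (by exact_mod_cast hc'))
  · refine le_csInf (E_nonempty G _ hG) ?_
    rintro d ⟨u, v, huv, rfl⟩
    exact one_le_abs_natCast (fun hc => C.valid huv (Fin.ext hc))
  · refine csSup_le (E_nonempty G _ hG) ?_
    rintro d ⟨u, v, huv, rfl⟩
    exact abs_natCast_sub_le (C u).isLt (C v).isLt
  · refine csSup_le (P_nonempty G _ hG) ?_
    rintro d ⟨u, v, huv, rfl⟩
    exact abs_natCast_sub_le (C u).isLt (C v).isLt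

/-- Lower bound for the plane-width of any NED representation. -/
lemma pw_lb (G : SimpleGraph V) (hG : G.edgeSet.Nonempty) (ρ : V → ℝ) (hρ : NED1 G ρ) :
    (chrom G : ℝ) - 1 ≤ maxP1 ρ / minE1 G ρ := by
  set m := minE1 G ρ with hm
  have hm0 : 0 < m := minE1_pos G ρ hG hρ
  have hne : (Finset.univ : Finset V).Nonempty := by
    obtain ⟨u, _, _⟩ := exists_adj G hG; exact ⟨u, Finset.mem_univ u⟩
  obtain ⟨a, _, hamin⟩ := Finset.exists_min_image Finset.univ ρ hne
  obtain ⟨b, _, hbmax⟩ := Finset.exists_max_image Finset.univ ρ hne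
  have hav : ∀ v, ρ a ≤ ρ v := fun v => hamin v (Finset.mem_univ v)
  have hbv : ∀ v, ρ v ≤ ρ b := fun v => hbmax v (Finset.mem_univ v)
  set S := (ρ b - ρ a) / m with hS
  have hS0 : 0 ≤ S := div_nonneg (by linarith [hav b]) hm0.le
  have hfl0 : (0 : ℤ) ≤ ⌊S⌋ := Int.floor_nonneg.mpr hS0
  have hcv : ∀ v, (⌊(ρ v - ρ a) / m⌋).toNat < ⌊S⌋.toNat + 1 := by
    intro v
    have h1 : (ρ v - ρ a) / m ≤ S := by
      rw [hS]; gcongr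
      linarith [hbv v]
    have h2 : ⌊(ρ v - ρ a) / m⌋ ≤ ⌊S⌋ := Int.floor_le_floor h1
    have := Int.toNat_le_toNat h2
    omega
  have hcol : G.Colorable (⌊S⌋.toNat + 1) := by
    refine ⟨SimpleGraph.Coloring.mk (fun v => ⟨(⌊(ρ v - ρ a) / m⌋).toNat, hcv v⟩) ?_⟩
    intro u v huv hc
    have hge : 1 ≤ |(ρ u - ρ a) / m - (ρ v - ρ a) / m| := by
      have heq : (ρ u - ρ a) / m - (ρ v - ρ a) / m = (ρ u - ρ v) / m := by ring
      rw [heq, abs_div, abs_of_pos hm0]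
      rw [one_le_div hm0]
      exact minE1_le G ρ huv
    have hfl := floor_ne_of_one_le_abs hge
    have h0u : (0 : ℤ) ≤ ⌊(ρ u - ρ a) / m⌋ :=
      Int.floor_nonneg.mpr (div_nonneg (by linarith [hav u]) hm0.le)
    have h0v : (0 : ℤ) ≤ ⌊(ρ v - ρ a) / m⌋ :=
      Int.floor_nonneg.mpr (div_nonneg (by linarith [hav v]) hm0.le)
    have hval := congrArg Fin.val hc
    simp only at hval
    omega
  have hchrom : chrom G ≤ ⌊S⌋.toNat + 1 := chrom_min G hcol
  -- convert to reals
  have hcast : ((⌊S⌋.toNat : ℕ) : ℝ) = ((⌊S⌋ : ℤ) : ℝ) := by exact_mod_cast Int.toNat_of_nonneg hfl0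
  have h3 : (chrom G : ℝ) ≤ ((⌊S⌋.toNat : ℕ) : ℝ) + 1 := by exact_mod_cast hchrom
  have h4 : ((⌊S⌋ : ℤ) : ℝ) ≤ S := Int.floor_le S
  have h5 : (chrom G : ℝ) - 1 ≤ S := by rw [hcast] at h3; linarith
  -- S ≤ maxP1 ρ / m
  have hne2 : ρ a ≠ ρ b := by
    intro h
    obtain ⟨u, v, huv⟩ := exists_adj G hG
    have hu : ρ u = ρ a := le_antisymm (h ▸ hbv u) (hav u)
    have hv : ρ v = ρ a := le_antisymm (h ▸ hbv v) (hav v)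
    exact hρ huv (hu.trans hv.symm)
  have habne : a ≠ b := fun h => hne2 (congrArg ρ h)
  have h6 : ρ b - ρ a ≤ maxP1 ρ := by
    have := le_maxP1 ρ habne
    rwa [abs_sub_comm, abs_of_nonneg (by linarith [hav b])] at this
  have h7 : S ≤ maxP1 ρ / m := by rw [hS]; gcongr
  linarith

/-- Lower bound for the dilation ratio of any NED representation. -/
lemma dc_lb (G : SimpleGraph V) (hG : G.edgeSet.Nonempty) (ρ : V → ℝ) (hρ : NED1 G ρ) :
    (chrom G : ℝ) - 2 + 1 / ((Fintype.card V : ℝ) + 1) ≤ maxE1 G ρ / minE1 G ρ := by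
  set n := Fintype.card V with hn
  set s : ℝ := 1 / ((n : ℝ) + 1) with hs
  have hspos : 0 < s := by positivity
  set m := minE1 G ρ with hm
  have hm0 : 0 < m := minE1_pos G ρ hG hρ
  by_contra hcon
  push_neg at hcon
  set χ := chrom G with hχ
  have hχ2 : 2 ≤ χ := two_le_chrom G hG
  set k := χ - 1 with hk
  have hk1 : 1 ≤ k := by omega
  have hkR : (k : ℝ) = (χ : ℝ) - 1 := by
    rw [hk]; push_cast [Nat.cast_sub (by omega : 1 ≤ χ)]; ring
  obtain ⟨i, hin, hgood⟩ := exists_good_shift n (fun v => ρ v / m) le_rfl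
  set x : V → ℝ := fun v => ρ v / m - (i : ℝ) * s with hx
  have hgood' : ∀ v, Int.fract (x v) < 1 - s := by
    intro v
    have := hgood v
    rw [← hs] at this
    exact this
  -- key claim for ordered edges
  have claim : ∀ u v, G.Adj u v → ρ v ≤ ρ u →
      1 ≤ ⌊x u⌋ - ⌊x v⌋ ∧ ⌊x u⌋ - ⌊x v⌋ < (k : ℤ) := by
    intro u v huv hvu
    have hd : |ρ u - ρ v| = ρ u - ρ v := abs_of_nonneg (by linarith)
    have hd1 : m ≤ ρ u - ρ v := hd ▸ minE1_le G ρ huv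
    have hd2 : ρ u - ρ v ≤ maxE1 G ρ := hd ▸ le_maxE1 G ρ huv
    have hxuv : x u - x v = (ρ u - ρ v) / m := by rw [hx]; ring
    have hge1 : 1 ≤ x u - x v := by
      rw [hxuv, le_div_iff₀ hm0]; linarith
    have hle : x u - x v < (k : ℝ) - 1 + s := by
      rw [hxuv]
      have h1 : (ρ u - ρ v) / m ≤ maxE1 G ρ / m := by gcongr
      have h2 : maxE1 G ρ / m < (χ : ℝ) - 2 + s := hcon
      rw [hkR]; linarith
    constructor
    · have := floor_lt_floor_of_add_one_le (by linarith : x v + 1 ≤ x u)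
      omega
    · by_contra hcc
      push_neg at hcc
      have hcc' : ((k : ℤ) : ℝ) ≤ ((⌊x u⌋ - ⌊x v⌋ : ℤ) : ℝ) := by exact_mod_cast hcc
      push_cast at hcc'
      have hfv : (⌊x v⌋ : ℝ) + Int.fract (x v) = x v := Int.floor_add_fract (x v)
      have hfu : (⌊x u⌋ : ℝ) ≤ x u := Int.floor_le (x u)
      have hgv := hgood' v
      have : (k : ℝ) - 1 + s < x u - x v := by linarith
      linarith
  haveI : NeZero k := ⟨by omega⟩
  have hcol : G.Colorable k := by
    have C : G.Coloring (ZMod k) := by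
      refine SimpleGraph.Coloring.mk (fun v => ((⌊x v⌋ : ℤ) : ZMod k)) ?_
      intro u v huv hc
      rw [ZMod.intCast_eq_intCast_iff] at hc
      have hdvd : (k : ℤ) ∣ ⌊x v⌋ - ⌊x u⌋ := hc.dvd
      rcases le_total (ρ v) (ρ u) with h | h
      · obtain ⟨h1, h2⟩ := claim u v huv h
        have := Int.le_of_dvd (by omega) (dvd_neg.mpr hdvd)
        omega
      · obtain ⟨h1, h2⟩ := claim v u huv.symm h
        have := Int.le_of_dvd (by omega) hdvd
        omega
    simpa [ZMod.card] using C.colorable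
  have := chrom_min G hcol
  omega

/-- Lower bound for the resolution ratio of any injective representation. -/
lemma re_lb (G : SimpleGraph V) (hG : G.edgeSet.Nonempty) (ρ : V → ℝ)
    (hρ : Function.Injective ρ) : (chrom G : ℝ) - 1 ≤ maxE1 G ρ / minP1 ρ := by
  classical
  set p := minP1 ρ with hp
  have hp0 : 0 < p := minP1_pos G ρ hG hρ
  set M := maxE1 G ρ / p with hM
  have hM0 : 0 ≤ M := div_nonneg (maxE1_nonneg G ρ hG) hp0.le
  set K := (⌊M⌋).toNat with hK
  have hKZ : ((K : ℕ) : ℤ) = ⌊M⌋ := Int.toNat_of_nonneg (Int.floor_nonneg.mpr hM0)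
  have hKM : (K : ℝ) ≤ M := by
    have : ((K : ℕ) : ℝ) = ((⌊M⌋ : ℤ) : ℝ) := by exact_mod_cast hKZ
    rw [this]; exact Int.floor_le M
  set rank : V → ℕ := fun v => (Finset.univ.filter fun w => ρ w < ρ v).card with hrank
  have claim : ∀ u v, G.Adj u v → ρ u < ρ v → rank u < rank v ∧ rank v ≤ rank u + K := by
    intro u v huv huv'
    constructor
    · apply Finset.card_lt_card
      rw [Finset.ssubset_iff_of_subset]
      · exact ⟨u, by simp [huv'], by simp⟩
      · intro w hw
        simp only [Finset.mem_filter, Finset.mem_univ, true_and] at hw ⊢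
        linarith
    · set T := Finset.univ.filter fun w => ρ u ≤ ρ w ∧ ρ w ≤ ρ v with hT
      have hsub : (Finset.univ.filter fun w => ρ w < ρ v) ⊆
          (Finset.univ.filter fun w => ρ w < ρ u) ∪ T.erase v := by
        intro w hw
        simp only [Finset.mem_filter, Finset.mem_univ, true_and] at hw
        rcases lt_or_ge (ρ w) (ρ u) with h | h
        · exact Finset.mem_union_left _ (by simp [h])
        · refine Finset.mem_union_right _ (Finset.mem_erase.mpr ⟨?_, by simp [hT, h, hw.le]⟩)
          intro hwv; rw [hwv] at hw; exact lt_irrefl _ hw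
      have hTcard : T.card ≤ K + 1 := by
        have hinj : ∀ w ∈ T, (⌊(ρ w - ρ u) / p⌋).toNat ∈ Finset.range (K + 1) := by
          intro w hw
          simp only [hT, Finset.mem_filter, Finset.mem_univ, true_and] at hw
          have h1 : (ρ w - ρ u) / p ≤ M := by
            have hvu : ρ v - ρ u ≤ maxE1 G ρ := by
              have := le_maxE1 G ρ huv
              rwa [abs_sub_comm, abs_of_nonneg (by linarith)] at this
            rw [hM]; gcongr; linarith [hw.2]
          have h2 : ⌊(ρ w - ρ u) / p⌋ ≤ ⌊M⌋ := Int.floor_le_floor h1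
          have := Int.toNat_le_toNat h2
          rw [Finset.mem_range]
          omega
        refine ((Finset.card_le_card_of_injOn _ hinj ?_).trans_eq (Finset.card_range _))
        intro w hw w' hw' heq
        by_contra hne
        simp only [Finset.coe_filter, Set.mem_setOf_eq, hT, Finset.mem_coe,
          Finset.mem_filter, Finset.mem_univ, true_and] at hw hw'
        have hge : 1 ≤ |(ρ w - ρ u) / p - (ρ w' - ρ u) / p| := by
          have heq2 : (ρ w - ρ u) / p - (ρ w' - ρ u) / p = (ρ w - ρ w') / p := by ring
          rw [heq2, abs_div, abs_of_pos hp0, one_le_div hp0]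
          exact minP1_le ρ hne
        have hfl := floor_ne_of_one_le_abs hge
        have h0w : (0 : ℤ) ≤ ⌊(ρ w - ρ u) / p⌋ :=
          Int.floor_nonneg.mpr (div_nonneg (by linarith [hw.1]) hp0.le)
        have h0w' : (0 : ℤ) ≤ ⌊(ρ w' - ρ u) / p⌋ :=
          Int.floor_nonneg.mpr (div_nonneg (by linarith [hw'.1]) hp0.le)
        have heq' : (⌊(ρ w - ρ u) / p⌋).toNat = (⌊(ρ w' - ρ u) / p⌋).toNat := heq
        omega
      have hvT : v ∈ T := by simp [hT, huv'.le]
      have := Finset.card_erase_of_mem hvT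
      have hcard := (Finset.card_le_card hsub).trans (Finset.card_union_le _ _)
      have hru : rank u = (Finset.univ.filter fun w => ρ w < ρ u).card := rfl
      have hrv : rank v = (Finset.univ.filter fun w => ρ w < ρ v).card := rfl
      omega
  haveI : NeZero (K + 1) := ⟨by omega⟩
  have hcol : G.Colorable (K + 1) := by
    have C : G.Coloring (ZMod (K + 1)) := by
      refine SimpleGraph.Coloring.mk (fun v => (((rank v : ℤ)) : ZMod (K + 1))) ?_
      intro u v huv hc
      rw [ZMod.intCast_eq_intCast_iff] at hc
      have hdvd : ((K + 1 : ℕ) : ℤ) ∣ (rank v : ℤ) - (rank u : ℤ) := hc.dvd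
      have hne : ρ u ≠ ρ v := fun h => huv.ne (hρ h)
      rcases hne.lt_or_gt with h | h
      · obtain ⟨h1, h2⟩ := claim u v huv h
        have := Int.le_of_dvd (by omega) hdvd
        omega
      · obtain ⟨h1, h2⟩ := claim v u huv.symm h
        have := Int.le_of_dvd (by omega) (dvd_neg.mpr hdvd)
        omega
    simpa [ZMod.card] using C.colorable
  have hchrom := chrom_min G hcol
  have : (chrom G : ℝ) ≤ (K : ℝ) + 1 := by exact_mod_cast hchrom
  linarith

/-- `⌈dc₁(G)⌉ = pw₁(G) ≤ re₁(G)`. -/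
theorem stmt_11 {V : Type*} [Fintype V] (G : SimpleGraph V) (hG : G.edgeSet.Nonempty) :
    (⌈dc1 G⌉ : ℝ) = pw1 G ∧ pw1 G ≤ re1 G := by
  classical
  set χ := chrom G with hχ
  have hχ2 : 2 ≤ χ := two_le_chrom G hG
  obtain ⟨ρ₀, hNED, hminE, hmaxE, hmaxP⟩ := coloring_rep G hG
  have hm0 : 0 < minE1 G ρ₀ := minE1_pos G ρ₀ hG hNED
  obtain ⟨u₀, v₀, huv₀⟩ := exists_adj G hG
  have hmaxP_nonneg : ∀ ρ : V → ℝ, 0 ≤ maxP1 ρ := fun ρ =>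
    le_trans (abs_nonneg _) (le_maxP1 ρ huv₀.ne)
  have hdc_mem : maxE1 G ρ₀ / minE1 G ρ₀ ∈
      {r | ∃ ρ : V → ℝ, NED1 G ρ ∧ r = maxE1 G ρ / minE1 G ρ} := ⟨ρ₀, hNED, rfl⟩
  have hpw_mem : maxP1 ρ₀ / minE1 G ρ₀ ∈
      {r | ∃ ρ : V → ℝ, NED1 G ρ ∧ r = maxP1 ρ / minE1 G ρ} := ⟨ρ₀, hNED, rfl⟩
  have hdc_bdd : BddBelow {r | ∃ ρ : V → ℝ, NED1 G ρ ∧ r = maxE1 G ρ / minE1 G ρ} := by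
    refine ⟨0, ?_⟩; rintro r ⟨ρ, hρ, rfl⟩
    exact div_nonneg (maxE1_nonneg G ρ hG) (minE1_pos G ρ hG hρ).le
  have hpw_bdd : BddBelow {r | ∃ ρ : V → ℝ, NED1 G ρ ∧ r = maxP1 ρ / minE1 G ρ} := by
    refine ⟨0, ?_⟩; rintro r ⟨ρ, hρ, rfl⟩
    exact div_nonneg (hmaxP_nonneg ρ) (minE1_pos G ρ hG hρ).le
  have hdc_ub : dc1 G ≤ (χ : ℝ) - 1 := by
    refine le_trans (csInf_le hdc_bdd hdc_mem) ?_
    calc maxE1 G ρ₀ / minE1 G ρ₀ ≤ maxE1 G ρ₀ := div_le_self (maxE1_nonneg G ρ₀ hG) hminE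
    _ ≤ (χ : ℝ) - 1 := hmaxE
  have hpw_ub : pw1 G ≤ (χ : ℝ) - 1 := by
    refine le_trans (csInf_le hpw_bdd hpw_mem) ?_
    calc maxP1 ρ₀ / minE1 G ρ₀ ≤ maxP1 ρ₀ := div_le_self (hmaxP_nonneg ρ₀) hminE
    _ ≤ (χ : ℝ) - 1 := hmaxP
  have hpw_lb : (χ : ℝ) - 1 ≤ pw1 G := by
    refine le_csInf ⟨_, hpw_mem⟩ ?_
    rintro r ⟨ρ, hρ, rfl⟩
    exact pw_lb G hG ρ hρ
  have hpw : pw1 G = (χ : ℝ) - 1 := le_antisymm hpw_ub hpw_lb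
  have hdc_lb : (χ : ℝ) - 2 + 1 / ((Fintype.card V : ℝ) + 1) ≤ dc1 G := by
    refine le_csInf ⟨_, hdc_mem⟩ ?_
    rintro r ⟨ρ, hρ, rfl⟩
    exact dc_lb G hG ρ hρ
  have hre_lb : (χ : ℝ) - 1 ≤ re1 G := by
    have hinj : Function.Injective (fun v => (((Fintype.equivFin V) v : ℕ) : ℝ)) := by
      intro a b hab
      have hab' : (((Fintype.equivFin V) a : ℕ) : ℝ) = (((Fintype.equivFin V) b : ℕ) : ℝ) := hab
      exact (Fintype.equivFin V).injective (Fin.ext (by exact_mod_cast hab'))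
    refine le_csInf ⟨_, (fun v => (((Fintype.equivFin V) v : ℕ) : ℝ)), hinj, rfl⟩ ?_
    rintro r ⟨ρ, hρ, rfl⟩
    exact re_lb G hG ρ hρ
  have hpos : (0 : ℝ) < 1 / ((Fintype.card V : ℝ) + 1) := by positivity
  constructor
  · have hceil : ⌈dc1 G⌉ = (χ : ℤ) - 1 := by
      rw [Int.ceil_eq_iff]
      constructor
      · push_cast; linarith
      · push_cast; linarith
    rw [hceil, hpw]; push_cast; ring
  · rw [hpw]; exact hre_lb
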